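/- The pair (A,A') is good if and only if A ∩ A' = A^⊥ ∩ A'^⊥ ∩ (A + A'). -/

import Mathlib

open Module Submodule

variable {k V : Type*} [Field k] [AddCommGroup V] [Module k V]

/-- The orthogonal `A^⊥ = {x ∈ V : ⟨x,a⟩ = 0 ∀ a ∈ A}` of a subspace `A` of `V` with
respect to a bilinear form `B` on `V`. -/
def perp (B : V →ₗ[k] V →ₗ[k] k) (A : Submodule k V) : Submodule k V where
  carrier := {x | ∀ a ∈ A, B x a = 0}
  add_mem' := fun {x y} hx hy a ha => by
    simp [map_add, LinearMap.add_apply, hx a ha, hy a ha]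
  zero_mem' := fun a ha => by simp
  smul_mem' := fun c x hx a ha => by
    simp [map_smul, LinearMap.smul_apply, hx a ha]

/-- The pair `(A,A')` of isotropic subspaces is *good* if there is a subspace `L` with
`A^⊥ = L ⊕ A` and `A'^⊥ = L ⊕ A'` (internal direct sums). -/
def IsGood (B : V →ₗ[k] V →ₗ[k] k) (A A' : Submodule k V) : Prop :=
  ∃ L : Submodule k V,
    (Disjoint L A ∧ L ⊔ A = perp B A) ∧ (Disjoint L A' ∧ L ⊔ A' = perp B A')

theorem mem_perp' {B : V →ₗ[k] V →ₗ[k] k} {A : Submodule k V} {x : V} :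
    x ∈ perp B A ↔ ∀ a ∈ A, B x a = 0 := Iff.rfl

theorem perp_anti {B : V →ₗ[k] V →ₗ[k] k} {A A' : Submodule k V} (h : A ≤ A') :
    perp B A' ≤ perp B A := fun _ hx a ha => hx a (h ha)

theorem perp_eq_orthogonal {B : V →ₗ[k] V →ₗ[k] k} (halt : ∀ x : V, B x x = 0)
    (A : Submodule k V) : perp B A = LinearMap.BilinForm.orthogonal B A := by
  have hrefl : LinearMap.IsRefl B := LinearMap.IsAlt.isRefl halt
  ext x
  exact ⟨fun h n hn => hrefl _ _ (h n hn), fun h a ha => hrefl _ _ (h a ha)⟩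

theorem perp_perp [FiniteDimensional k V] {B : V →ₗ[k] V →ₗ[k] k}
    (halt : ∀ x : V, B x x = 0) (hnd : ∀ x : V, (∀ y : V, B x y = 0) → x = 0)
    (A : Submodule k V) : perp B (perp B A) = A := by
  rw [perp_eq_orthogonal halt, perp_eq_orthogonal halt]
  exact LinearMap.BilinForm.orthogonal_orthogonal ((LinearMap.IsAlt.isRefl halt).nondegenerate_iff_separatingLeft.mpr hnd) (LinearMap.IsAlt.isRefl halt) A

theorem perp_sup {B : V →ₗ[k] V →ₗ[k] k} (A A' : Submodule k V) :
    perp B (A ⊔ A') = perp B A ⊓ perp B A' := by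
  apply le_antisymm
  · exact le_inf (perp_anti le_sup_left) (perp_anti le_sup_right)
  · intro x hx
    obtain ⟨hx1, hx2⟩ := Submodule.mem_inf.mp hx
    intro a ha
    obtain ⟨b, hb, c, hc, rfl⟩ := Submodule.mem_sup.mp ha
    simp [map_add, hx1 b hb, hx2 c hc]

/-- Let `V` be a `2n`-dimensional symplectic vector space over `k` and let
`A, A'` be `t`-dimensional isotropic subspaces (`0 ≤ t ≤ n`).  The pair `(A,A')` is good
if and only if `A ∩ A' = A^⊥ ∩ A'^⊥ ∩ (A + A')`. -/
theorem stmt4 [FiniteDimensional k V] (n t : ℕ) (hn : 1 ≤ n) (htn : t ≤ n)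
    (B : V →ₗ[k] V →ₗ[k] k)
    (hdim : finrank k V = 2 * n)
    (halt : ∀ x : V, B x x = 0)
    (hnd : ∀ x : V, (∀ y : V, B x y = 0) → x = 0)
    (A A' : Submodule k V)
    (hA : A ≤ perp B A) (hA' : A' ≤ perp B A')
    (hdA : finrank k A = t) (hdA' : finrank k A' = t) :
    IsGood B A A' ↔ A ⊓ A' = perp B A ⊓ perp B A' ⊓ (A ⊔ A') := by
  have hrefl : ∀ x y : V, B x y = 0 → B y x = 0 :=
    fun x y h => LinearMap.IsAlt.isRefl halt x y h
  constructor
  · rintro ⟨L, ⟨hdL, hsL⟩, hdL', hsL'⟩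
    -- Key: given the decompositions, `P' ⊓ perp B P ≤ P`.
    have key : ∀ P P' : Submodule k V, Disjoint L P → L ⊔ P = perp B P →
        L ⊔ P' = perp B P' → P' ⊓ perp B P ≤ P := by
      intro P P' hd hs hs' v hv
      obtain ⟨hv1, hv2⟩ := Submodule.mem_inf.mp hv
      rw [← hs] at hv2
      obtain ⟨l, hl, a, ha, rfl⟩ := Submodule.mem_sup.mp hv2
      have hLperp : L ≤ perp B P := by rw [← hs]; exact le_sup_left
      have hLperp' : L ≤ perp B P' := by rw [← hs']; exact le_sup_left
      have hl0 : l = 0 := by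
        have hlP : l ∈ P := by
          have hmem : l ∈ perp B (perp B P) := by
            intro y hy
            rw [← hs] at hy
            obtain ⟨m, hm, c, hc, rfl⟩ := Submodule.mem_sup.mp hy
            have h1 : B l c = 0 := hLperp hl c hc
            have h2 : B l m = 0 := by
              apply hrefl
              have hmv : B m (l + a) = 0 := hLperp' hm _ hv1
              have hma : B m a = 0 := hLperp hm a ha
              have : B m l + B m a = 0 := by rw [← map_add]; exact hmv
              rw [hma, add_zero] at this
              exact this
            simp [map_add, h1, h2]
          rwa [perp_perp halt hnd] at hmem
        exact Submodule.disjoint_def.mp hd l hl hlP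
      rw [hl0, zero_add]
      exact ha
    have key1 : A' ⊓ perp B A ≤ A := key A A' hdL hsL hsL'
    have key2 : A ⊓ perp B A' ≤ A' := key A' A hdL' hsL' hsL
    apply le_antisymm
    · exact le_inf (le_inf (inf_le_left.trans hA) (inf_le_right.trans hA'))
        (inf_le_left.trans le_sup_left)
    · intro x hx
      obtain ⟨hxw, hx3⟩ := Submodule.mem_inf.mp hx
      obtain ⟨hx1, hx2⟩ := Submodule.mem_inf.mp hxw
      obtain ⟨a, ha, a', ha', rfl⟩ := Submodule.mem_sup.mp hx3
      have ha'p : a' ∈ perp B A := by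
        have := Submodule.sub_mem _ hx1 (hA ha)
        simpa using this
      have hap : a ∈ perp B A' := by
        have := Submodule.sub_mem _ hx2 (hA' ha')
        simpa using this
      have ha'A : a' ∈ A := key1 (Submodule.mem_inf.mpr ⟨ha', ha'p⟩)
      have haA' : a ∈ A' := key2 (Submodule.mem_inf.mpr ⟨ha, hap⟩)
      exact Submodule.add_mem _ (Submodule.mem_inf.mpr ⟨ha, haA'⟩)
        (Submodule.mem_inf.mpr ⟨ha'A, ha'⟩)
  · intro heq
    set W : Submodule k V := perp B A ⊓ perp B A' with hW
    have hWsup : W = perp B (A ⊔ A') := (perp_sup A A').symm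
    have hCW : A ⊓ A' ≤ W :=
      le_inf (inf_le_left.trans hA) (inf_le_right.trans hA')
    -- W ⊓ A = A ⊓ A' and W ⊓ A' = A ⊓ A'
    have hWA : W ⊓ A = A ⊓ A' := by
      apply le_antisymm
      · intro x hx
        obtain ⟨hx1, hx2⟩ := Submodule.mem_inf.mp hx
        rw [heq]
        exact Submodule.mem_inf.mpr ⟨hx1, le_sup_left (α := Submodule k V) hx2⟩
      · exact le_inf hCW inf_le_left
    have hWA' : W ⊓ A' = A ⊓ A' := by
      apply le_antisymm
      · intro x hx
        obtain ⟨hx1, hx2⟩ := Submodule.mem_inf.mp hx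
        rw [heq]
        exact Submodule.mem_inf.mpr ⟨hx1, le_sup_right (α := Submodule k V) hx2⟩
      · exact le_inf hCW inf_le_right
    -- W ⊔ A = perp B A and W ⊔ A' = perp B A'
    have hperpW : perp B W = A ⊔ A' := by
      rw [hWsup, perp_perp halt hnd]
    have hWsupA : W ⊔ A = perp B A := by
      apply le_antisymm (sup_le inf_le_left hA)
      have hstep : perp B (W ⊔ A) ≤ A := by
        rw [perp_sup, hperpW]
        intro x hx
        obtain ⟨hx1, hx2⟩ := Submodule.mem_inf.mp hx
        obtain ⟨a, ha, a', ha', rfl⟩ := Submodule.mem_sup.mp hx1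
        have ha'p : a' ∈ perp B A := by
          have := Submodule.sub_mem _ hx2 (hA ha)
          simpa using this
        have : a' ∈ A ⊓ A' := by
          rw [heq]
          exact Submodule.mem_inf.mpr ⟨Submodule.mem_inf.mpr ⟨ha'p, hA' ha'⟩,
            le_sup_right (α := Submodule k V) ha'⟩
        exact Submodule.add_mem _ ha this.1
      have := perp_anti (B := B) hstep
      rwa [perp_perp halt hnd] at this
    have hWsupA' : W ⊔ A' = perp B A' := by
      apply le_antisymm (sup_le inf_le_right hA')
      have hstep : perp B (W ⊔ A') ≤ A' := by
        rw [perp_sup, hperpW]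
        intro x hx
        obtain ⟨hx1, hx2⟩ := Submodule.mem_inf.mp hx
        obtain ⟨a, ha, a', ha', rfl⟩ := Submodule.mem_sup.mp hx1
        have hap : a ∈ perp B A' := by
          have := Submodule.sub_mem _ hx2 (hA' ha')
          simpa using this
        have : a ∈ A ⊓ A' := by
          rw [heq]
          exact Submodule.mem_inf.mpr ⟨Submodule.mem_inf.mpr ⟨hA ha, hap⟩,
            le_sup_left (α := Submodule k V) ha⟩
        exact Submodule.add_mem _ this.2 ha'
      have := perp_anti (B := B) hstep
      rwa [perp_perp halt hnd] at this
    -- choose a complement L of A ⊓ A' inside W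
    obtain ⟨L₀, hL₀⟩ := Submodule.exists_isCompl (Submodule.comap W.subtype (A ⊓ A'))
    set L : Submodule k V := L₀.map W.subtype with hLdef
    have hLW : L ≤ W := Submodule.map_subtype_le W L₀
    have hmapC : Submodule.map W.subtype (Submodule.comap W.subtype (A ⊓ A')) = A ⊓ A' := by
      rw [Submodule.map_comap_subtype, inf_eq_right.mpr hCW]
    have hdisLC : Disjoint L (A ⊓ A') := by
      rw [Submodule.disjoint_def]
      intro x hxL hxC
      obtain ⟨y, hy, rfl⟩ := hxL
      have hyC : y ∈ Submodule.comap W.subtype (A ⊓ A') := hxC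
      have : y = 0 := Submodule.disjoint_def.mp hL₀.symm.disjoint y hy hyC
      rw [this]; simp
    have hsupLC : L ⊔ (A ⊓ A') = W := by
      have := congrArg (Submodule.map W.subtype) hL₀.sup_eq_top
      rw [Submodule.map_sup, hmapC, Submodule.map_top, Submodule.range_subtype] at this
      rw [sup_comm]
      exact this
    refine ⟨L, ⟨?_, ?_⟩, ?_, ?_⟩
    · rw [disjoint_iff]
      have h1 : L ⊓ A ≤ L ⊓ (A ⊓ A') := by
        refine le_inf inf_le_left ?_
        rw [← hWA]
        exact le_inf (inf_le_left.trans hLW) inf_le_right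
      rw [disjoint_iff] at hdisLC
      exact le_bot_iff.mp (h1.trans_eq hdisLC)
    · have h2 : L ⊔ A = (L ⊔ (A ⊓ A')) ⊔ A := by
        rw [sup_assoc, sup_eq_right.mpr (inf_le_left : A ⊓ A' ≤ A)]
      rw [h2, hsupLC, hWsupA]
    · rw [disjoint_iff]
      have h1 : L ⊓ A' ≤ L ⊓ (A ⊓ A') := by
        refine le_inf inf_le_left ?_
        rw [← hWA']
        exact le_inf (inf_le_left.trans hLW) inf_le_right
      rw [disjoint_iff] at hdisLC
      exact le_bot_iff.mp (h1.trans_eq hdisLC)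
    · have h2 : L ⊔ A' = (L ⊔ (A ⊓ A')) ⊔ A' := by
        rw [sup_assoc, sup_eq_right.mpr (inf_le_right : A ⊓ A' ≤ A')]
      rw [h2, hsupLC, hWsupA']
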